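/- Let V be a real inner product space and δ > 0. For all x, y ∈ V with ‖x‖ ≥ δ and ‖y‖ ≥ δ, and every real ρ ≥ 0, one has ρ/‖y‖ ≤ ρ/‖x‖ − ρ · ⟨x/‖x‖³, y − x⟩ + (ρ/δ³) · ‖y − x‖². -/

import Mathlib

open scoped RealInnerProductSpace

/-- Descent-type inequality for `ρ/‖·‖` on `{x : ‖x‖ ≥ δ}`: for `ρ ≥ 0` and
`‖x‖, ‖y‖ ≥ δ > 0`,
`ρ/‖y‖ ≤ ρ/‖x‖ − ρ ⟨x/‖x‖³, y − x⟩ + (ρ/δ³) ‖y − x‖²`. -/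
theorem descent_inequality_inv_norm {V : Type*} [NormedAddCommGroup V]
    [InnerProductSpace ℝ V] (δ : ℝ) (hδ : 0 < δ)
    (x y : V) (hx : δ ≤ ‖x‖) (hy : δ ≤ ‖y‖) (ρ : ℝ) (hρ : 0 ≤ ρ) :
    ρ / ‖y‖ ≤ ρ / ‖x‖ - ρ * ⟪(‖x‖ ^ 3)⁻¹ • x, y - x⟫ + ρ / δ ^ 3 * ‖y - x‖ ^ 2 := by
  set a := ‖x‖ with ha'
  set b := ‖y‖ with hb'
  set d := ‖y - x‖ with hd'
  have ha : 0 < a := lt_of_lt_of_le hδ hx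
  have hb : 0 < b := lt_of_lt_of_le hδ hy
  have hdnn : 0 ≤ d := norm_nonneg _
  have habs : |a - b| ≤ d := by
    rw [ha', hb', hd', ← norm_sub_rev]
    exact abs_norm_sub_norm_le x y
  have h1 : (a - b) ^ 2 ≤ d ^ 2 := by
    nlinarith [sq_abs (a - b), abs_nonneg (a - b)]
  have h2 : δ ^ 3 ≤ a ^ 2 * b := by
    calc δ ^ 3 = δ * δ * δ := by ring
      _ ≤ a * a * b := mul_le_mul (mul_le_mul hx hx hδ.le ha.le) hy hδ.le (by positivity)
      _ = a ^ 2 * b := by ring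
  have hinner : ⟪(‖x‖ ^ 3)⁻¹ • x, y - x⟫ = (a ^ 3)⁻¹ * (⟪x, y⟫ - a ^ 2) := by
    rw [real_inner_smul_left, inner_sub_right, real_inner_self_eq_norm_sq]
  have hdsq : d ^ 2 = a ^ 2 + b ^ 2 - 2 * ⟪x, y⟫ := by
    rw [hd', ha', hb', norm_sub_sq_real, real_inner_comm]; ring
  set s := (⟪x, y⟫ : ℝ) with hs'
  have key : 1 / b ≤ 1 / a - (a ^ 3)⁻¹ * (s - a ^ 2) + 1 / δ ^ 3 * d ^ 2 := by
    have hsval : s = (a ^ 2 + b ^ 2 - d ^ 2) / 2 := by linarith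
    rw [hsval]
    have t1 : 0 ≤ δ ^ 3 * (d ^ 2 - (a - b) ^ 2) * (2 * a + b) :=
      mul_nonneg (mul_nonneg (by positivity) (by linarith)) (by positivity)
    have t2 : 0 ≤ 2 * a * d ^ 2 * (a ^ 2 * b - δ ^ 3) :=
      mul_nonneg (by positivity) (by linarith)
    have hane : a ≠ 0 := ne_of_gt ha
    field_simp
    nlinarith [t1, t2]
  rw [hinner]
  have := mul_le_mul_of_nonneg_left key hρ
  have e1 : ρ / b = ρ * (1 / b) := by ring
  have e2 : ρ / a - ρ * ((a ^ 3)⁻¹ * (s - a ^ 2)) + ρ / δ ^ 3 * d ^ 2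
      = ρ * (1 / a - (a ^ 3)⁻¹ * (s - a ^ 2) + 1 / δ ^ 3 * d ^ 2) := by ring
  rw [e1, e2]
  exact this
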